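/- Let P be a probability measure on Ω₁ × Ω₂ with marginal P₁, let S = I × Ω₂ be a stripe with P₁(I) > 0, and define the vertical size v(U | S) = P(U ∩ S)/P(S) for measurable U. Let S' = I' × Ω₂ with I' ⊆ I, P₁(I') > 0, and suppose U₁ ⊆ U₂ are measurable sets with v(U₁ | S) ≤ ε, v(U₂ | S') ≤ ε for each S' in a disjoint family {S'ⱼ} of substripes of S, and |v(U₁ | S) − v(U₁ | S'ⱼ)| ≤ 2δ for each j. Then P((U₁ ∩ (S \ ⋃ⱼ S'ⱼ)) ∪ ⋃ⱼ (U₂ ∩ S'ⱼ)) ≤ (ε + 2δ) · P(S). -/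

import Mathlib

open MeasureTheory Set

abbrev Cantor : Type := ℕ → Bool

def cyl (a : List Bool) : Set Cantor := {ω | ∀ i : Fin a.length, ω i = a.get i}

/-- The (average) vertical size of `U` in a stripe `S`. -/
noncomputable def vsize (P : Measure (Cantor × Cantor))
    (U S : Set (Cantor × Cantor)) : ℝ :=
  (P (U ∩ S)).toReal / (P S).toReal

lemma meas_cyl (a : List Bool) : MeasurableSet (cyl a) := by
  have h : cyl a = ⋂ i : Fin a.length, (fun ω : Cantor => ω (i : ℕ)) ⁻¹' {a.get i} := by
    ext ω; simp [cyl]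
  rw [h]
  exact MeasurableSet.iInter fun i => (measurable_pi_apply (i : ℕ)) (measurableSet_singleton _)

/-- Key estimate of the trimming construction (Lemma 6): replacing `U₁` by
`U₂` inside a disjoint family of good substripes increases the measure by at
most `(ε + 2δ)·P(S)`. -/
theorem stmt_10 (P : Measure (Cantor × Cantor)) [IsProbabilityMeasure P]
    (P1 : Measure Cantor) (hP1 : P1 = P.map Prod.fst)
    (I : List Bool) (hI : 0 < P1 (cyl I))
    (I' : ℕ → List Bool) (hI' : ∀ j, 0 < P1 (cyl (I' j)))
    (hsub : ∀ j, cyl (I' j) ⊆ cyl I)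
    (hdisj : Pairwise fun i j => Disjoint (cyl (I' i)) (cyl (I' j)))
    (U1 U2 : Set (Cantor × Cantor)) (hU1 : MeasurableSet U1)
    (hU2 : MeasurableSet U2) (hU12 : U1 ⊆ U2)
    (ε δ : ℝ) (hε : 0 ≤ ε) (hδ : 0 ≤ δ)
    (hv1 : vsize P U1 (cyl I ×ˢ (univ : Set Cantor)) ≤ ε)
    (hv2 : ∀ j, vsize P U2 (cyl (I' j) ×ˢ (univ : Set Cantor)) ≤ ε)
    (hclose : ∀ j,
      |vsize P U1 (cyl I ×ˢ (univ : Set Cantor)) -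
        vsize P U1 (cyl (I' j) ×ˢ (univ : Set Cantor))| ≤ 2 * δ) :
    P ((U1 ∩ ((cyl I ×ˢ (univ : Set Cantor)) \
          ⋃ j : ℕ, cyl (I' j) ×ˢ (univ : Set Cantor))) ∪
        ⋃ j : ℕ, U2 ∩ (cyl (I' j) ×ˢ (univ : Set Cantor))) ≤
      ENNReal.ofReal ((ε + 2 * δ) *
        (P (cyl I ×ˢ (univ : Set Cantor))).toReal) := by
  set S : Set (Cantor × Cantor) := cyl I ×ˢ (univ : Set Cantor) with hSdef
  set Sj : ℕ → Set (Cantor × Cantor) := fun j => cyl (I' j) ×ˢ (univ : Set Cantor) with hSjdef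
  have mS : MeasurableSet S := (meas_cyl I).prod MeasurableSet.univ
  have mSj : ∀ j, MeasurableSet (Sj j) := fun j => (meas_cyl (I' j)).prod MeasurableSet.univ
  have hPmap : ∀ (a : List Bool), P1 (cyl a) = P (cyl a ×ˢ (univ : Set Cantor)) := by
    intro a
    rw [hP1, Measure.map_apply measurable_fst (meas_cyl a), ← Set.prod_univ]
  have hPS : 0 < P S := by rw [hSdef, ← hPmap]; exact hI
  have hPSj : ∀ j, 0 < P (Sj j) := fun j => by rw [hSjdef]; rw [← hPmap]; exact hI' j
  have hSjS : ∀ j, Sj j ⊆ S := fun j => Set.prod_mono (hsub j) (subset_refl _)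
  have hdisjS : Pairwise (Function.onFun Disjoint Sj) := fun i j h =>
    Set.disjoint_prod.mpr (Or.inl (hdisj h))
  -- real quantities
  set s : ℝ := (P S).toReal with hsdef
  set a : ℝ := (P (U1 ∩ S)).toReal with hadef
  set aj : ℕ → ℝ := fun j => (P (U1 ∩ Sj j)).toReal with hajdef
  set bj : ℕ → ℝ := fun j => (P (U2 ∩ Sj j)).toReal with hbjdef
  set sj : ℕ → ℝ := fun j => (P (Sj j)).toReal with hsjdef
  set v : ℝ := vsize P U1 S with hvdef
  have hs_pos : 0 < s := ENNReal.toReal_pos hPS.ne' (measure_ne_top _ _)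
  have hsj_pos : ∀ j, 0 < sj j := fun j => ENNReal.toReal_pos (hPSj j).ne' (measure_ne_top _ _)
  have hva : a = v * s := by
    rw [hvdef]; unfold vsize; field_simp
    exact (mul_div_cancel_right₀ a hs_pos.ne').symm
  have hvle : v ≤ ε := hv1
  have haj : ∀ j, (v - 2 * δ) * sj j ≤ aj j := by
    intro j
    have h := hclose j
    have h2 : v - aj j / sj j ≤ 2 * δ := (abs_le.mp h).2
    have h3 : v - 2 * δ ≤ aj j / sj j := by linarith
    calc (v - 2 * δ) * sj j ≤ (aj j / sj j) * sj j :=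
          mul_le_mul_of_nonneg_right h3 (hsj_pos j).le
      _ = aj j := div_mul_cancel₀ _ (hsj_pos j).ne'
  have hbj : ∀ j, bj j ≤ ε * sj j := by
    intro j
    have h := hv2 j
    calc bj j = (bj j / sj j) * sj j := (div_mul_cancel₀ _ (hsj_pos j).ne').symm
      _ ≤ ε * sj j := mul_le_mul_of_nonneg_right h (hsj_pos j).le
  -- summability
  have hsumSj : ∑' j, P (Sj j) ≠ ⊤ := by
    rw [← measure_iUnion hdisjS mSj]; exact measure_ne_top _ _
  have hsumAj : ∑' j, P (U1 ∩ Sj j) ≠ ⊤ :=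
    ne_top_of_le_ne_top hsumSj (ENNReal.tsum_le_tsum fun j => measure_mono inter_subset_right)
  have hsumBj : ∑' j, P (U2 ∩ Sj j) ≠ ⊤ :=
    ne_top_of_le_ne_top hsumSj (ENNReal.tsum_le_tsum fun j => measure_mono inter_subset_right)
  have hSumsj : Summable sj := ENNReal.summable_toReal hsumSj
  have hSumaj : Summable aj := ENNReal.summable_toReal hsumAj
  have hSumbj : Summable bj := ENNReal.summable_toReal hsumBj
  have htsum_sj : ∑' j, sj j ≤ s := by
    rw [hsjdef, hsdef, ← ENNReal.tsum_toReal_eq (fun j => measure_ne_top _ _)]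
    exact ENNReal.toReal_mono (measure_ne_top _ _)
      ((measure_iUnion hdisjS mSj) ▸ measure_mono (iUnion_subset hSjS))
  -- key measure decomposition
  have hAj_le_A : ∑' j, P (U1 ∩ Sj j) ≤ P (U1 ∩ S) := by
    rw [← measure_iUnion (fun i j h => (hdisjS h).mono inter_subset_right inter_subset_right)
      (fun j => hU1.inter (mSj j))]
    refine measure_mono ?_
    rw [← inter_iUnion]
    exact inter_subset_inter_right _ (iUnion_subset hSjS)
  have hdecomp : P (U1 ∩ (S \ ⋃ j, Sj j)) = P (U1 ∩ S) - ∑' j, P (U1 ∩ Sj j) := by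
    have h1 : U1 ∩ (S \ ⋃ j, Sj j) = (U1 ∩ S) \ (⋃ j, U1 ∩ Sj j) := by
      ext x
      by_cases hx : x ∈ U1 <;> simp [hx, mem_iUnion]
    rw [h1, measure_diff ?_ ?_ ?_]
    · rw [measure_iUnion (fun i j h => (hdisjS h).mono inter_subset_right inter_subset_right)
        (fun j => hU1.inter (mSj j))]
    · rw [← inter_iUnion]
      exact inter_subset_inter_right _ (iUnion_subset hSjS)
    · exact (MeasurableSet.iUnion fun j => hU1.inter (mSj j)).nullMeasurableSet
    · exact measure_ne_top _ _
  -- the ENNReal bound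
  have hstep : P ((U1 ∩ (S \ ⋃ j, Sj j)) ∪ ⋃ j, U2 ∩ Sj j) ≤
      (P (U1 ∩ S) - ∑' j, P (U1 ∩ Sj j)) + ∑' j, P (U2 ∩ Sj j) := by
    calc P ((U1 ∩ (S \ ⋃ j, Sj j)) ∪ ⋃ j, U2 ∩ Sj j)
        ≤ P (U1 ∩ (S \ ⋃ j, Sj j)) + P (⋃ j, U2 ∩ Sj j) := measure_union_le _ _
      _ = (P (U1 ∩ S) - ∑' j, P (U1 ∩ Sj j)) + ∑' j, P (U2 ∩ Sj j) := by
          rw [hdecomp, measure_iUnion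
            (fun i j h => (hdisjS h).mono inter_subset_right inter_subset_right)
            (fun j => hU2.inter (mSj j))]
  refine hstep.trans ?_
  -- convert to reals
  have hfin1 : P (U1 ∩ S) - ∑' j, P (U1 ∩ Sj j) ≠ ⊤ :=
    ne_top_of_le_ne_top (measure_ne_top _ _) tsub_le_self
  have hLHSfin : (P (U1 ∩ S) - ∑' j, P (U1 ∩ Sj j)) + ∑' j, P (U2 ∩ Sj j) ≠ ⊤ :=
    ENNReal.add_ne_top.mpr ⟨hfin1, hsumBj⟩
  rw [← ENNReal.ofReal_toReal hLHSfin]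
  apply ENNReal.ofReal_le_ofReal
  rw [ENNReal.toReal_add hfin1 hsumBj,
    ENNReal.toReal_sub_of_le hAj_le_A (measure_ne_top _ _),
    ENNReal.tsum_toReal_eq (fun j => measure_ne_top _ _),
    ENNReal.tsum_toReal_eq (fun j => measure_ne_top _ _)]
  -- now a real-number computation
  have key : (∑' j, bj j) - (∑' j, aj j) ≤ (ε - v + 2 * δ) * s := by
    have h1 : (∑' j, bj j) - (∑' j, aj j) = ∑' j, (bj j - aj j) := (Summable.tsum_sub hSumbj hSumaj).symm
    rw [h1]
    have h2 : ∑' j, (bj j - aj j) ≤ ∑' j, (ε - v + 2 * δ) * sj j := by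
      refine Summable.tsum_le_tsum (fun j => ?_) (hSumbj.sub hSumaj) (hSumsj.mul_left _)
      have := haj j
      have := hbj j
      nlinarith [hsj_pos j]
    refine h2.trans ?_
    rw [tsum_mul_left]
    exact mul_le_mul_of_nonneg_left htsum_sj (by linarith)
  have : a - (∑' j, aj j) + (∑' j, bj j) ≤ (ε + 2 * δ) * s := by nlinarith
  linarith [this]
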